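/- Let 𝒞 be a set of colors and 𝒢 = {G_i : i ∈ 𝒞} a collection of bipartite graphs on a common bipartition Y ∪ B such that 7|Y| < |B| ≤ (3/5)|𝒞|. If Σ_{i ∈ 𝒞} |E(G_i)| ≥ t·|B|·|𝒞| for some integer t with 1 ≤ t ≤ |Y|, then there exist t pairwise vertex-disjoint stars S_1, …, S_t, each having 4 edges with its center in Y and its 4 leaves in B, together with an injective assignment of distinct colors of 𝒞 to the 4t edges, such that every edge assigned color c lies in G_c. -/

import Mathlib

open Finset

open Classical in
/-- Number of pairs (colour, leaf) available at a vertex `y`. -/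
noncomputable def pairCount {Y B C : Type*} [Fintype B] [Fintype C]
    (G : C → Y → B → Prop) (y : Y) : ℕ :=
  (Finset.univ.filter fun p : C × B => G p.1 y p.2).card

lemma pairCount_le {Y B C : Type*} [Fintype B] [Fintype C]
    (G : C → Y → B → Prop) (y : Y) :
    pairCount G y ≤ Fintype.card C * Fintype.card B := by
  classical
  calc pairCount G y ≤ (Finset.univ : Finset (C × B)).card := by
        rw [pairCount]; exact Finset.card_filter_le _ _
    _ = Fintype.card C * Fintype.card B := by
        rw [Finset.card_univ, Fintype.card_prod]

lemma pick_pair {Y B C : Type*} [Fintype B] [Fintype C]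
    (G : C → Y → B → Prop) (y : Y) (UC : Finset C) (UB : Finset B)
    (h : UC.card * Fintype.card B + UB.card * Fintype.card C < pairCount G y) :
    ∃ c b, G c y b ∧ c ∉ UC ∧ b ∉ UB := by
  classical
  by_contra hcon
  push_neg at hcon
  have hsub : (Finset.univ.filter fun p : C × B => G p.1 y p.2) ⊆
      UC ×ˢ (Finset.univ : Finset B) ∪ (Finset.univ : Finset C) ×ˢ UB := by
    intro p hp
    simp only [Finset.mem_filter] at hp
    rcases Classical.em (p.1 ∈ UC) with h1 | h1
    · exact Finset.mem_union_left _ (Finset.mem_product.mpr ⟨h1, Finset.mem_univ _⟩)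
    · exact Finset.mem_union_right _
        (Finset.mem_product.mpr ⟨Finset.mem_univ _, hcon p.1 p.2 hp.2 h1⟩)
  have hcard : pairCount G y ≤
      (UC ×ˢ (Finset.univ : Finset B) ∪ (Finset.univ : Finset C) ×ˢ UB).card := by
    rw [pairCount]
    convert Finset.card_le_card hsub using 2
  have hcard2 : (UC ×ˢ (Finset.univ : Finset B) ∪ (Finset.univ : Finset C) ×ˢ UB).card
      ≤ UC.card * Fintype.card B + UB.card * Fintype.card C := by
    calc _ ≤ (UC ×ˢ (Finset.univ : Finset B)).card
          + ((Finset.univ : Finset C) ×ˢ UB).card := Finset.card_union_le _ _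
      _ = UC.card * Fintype.card B + UB.card * Fintype.card C := by
          rw [Finset.card_product, Finset.card_product, Finset.card_univ, Finset.card_univ]
          ring
  omega

lemma double_count {Y B C : Type*} [Fintype Y] [Fintype B] [Fintype C]
    (G : C → Y → B → Prop) :
    ∑ i : C, Nat.card {p : Y × B // G i p.1 p.2} = ∑ y : Y, pairCount G y := by
  classical
  have h1 : ∀ i : C, Nat.card {p : Y × B // G i p.1 p.2}
      = (Finset.univ.filter fun p : Y × B => G i p.1 p.2).card := by
    intro i
    rw [Nat.card_eq_fintype_card, Fintype.card_subtype]
  simp only [h1, pairCount]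
  simp only [Finset.card_filter]
  simp only [Fintype.sum_prod_type]
  rw [Finset.sum_comm]

lemma top_select {Y : Type*} [DecidableEq Y] (f : Y → ℕ) (M : ℕ)
    (hf : ∀ y, f y ≤ M) :
    ∀ (t : ℕ) (S : Finset Y), t ≤ S.card → t * M ≤ ∑ y ∈ S, f y →
      ∃ g : Fin t → Y, Function.Injective g ∧ (∀ s, g s ∈ S) ∧
        ∀ s : Fin t, (s.val + 1) * M ≤ S.card * f (g s) := by
  intro t
  induction t with
  | zero =>
    intro S _ _
    exact ⟨Fin.elim0, fun a => a.elim0, fun a => a.elim0, fun a => a.elim0⟩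
  | succ n ih =>
    intro S hcard hsum
    have hne : S.Nonempty := Finset.card_pos.mp (by omega)
    obtain ⟨y0, hy0S, hy0max⟩ := S.exists_max_image f hne
    have hmax : ∑ y ∈ S, f y ≤ S.card * f y0 := by
      calc ∑ y ∈ S, f y ≤ S.card • f y0 :=
            Finset.sum_le_card_nsmul _ _ _ (fun x hx => hy0max x hx)
        _ = S.card * f y0 := smul_eq_mul _ _
    have hS' : n ≤ (S.erase y0).card := by
      rw [Finset.card_erase_of_mem hy0S]; omega
    have hsum' : n * M ≤ ∑ y ∈ S.erase y0, f y := by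
      have h1 := Finset.sum_erase_add S f hy0S
      have h2 := hf y0
      have h3 : (n + 1) * M = n * M + M := by ring
      omega
    obtain ⟨g, hginj, hgmem, hgbd⟩ := ih (S.erase y0) hS' hsum'
    refine ⟨Fin.snoc g y0, ?_, ?_, ?_⟩
    · intro a b hab
      induction a using Fin.lastCases with
      | last =>
        induction b using Fin.lastCases with
        | last => rfl
        | cast j =>
          rw [Fin.snoc_last, Fin.snoc_castSucc] at hab
          exact absurd hab.symm (Finset.mem_erase.mp (hgmem j)).1
      | cast i =>
        induction b using Fin.lastCases with
        | last =>
          rw [Fin.snoc_last, Fin.snoc_castSucc] at hab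
          exact absurd hab (Finset.mem_erase.mp (hgmem i)).1
        | cast j =>
          rw [Fin.snoc_castSucc, Fin.snoc_castSucc] at hab
          exact congrArg Fin.castSucc (hginj hab)
    · intro s
      induction s using Fin.lastCases with
      | last => rw [Fin.snoc_last]; exact hy0S
      | cast i => rw [Fin.snoc_castSucc]; exact Finset.erase_subset _ _ (hgmem i)
    · intro s
      induction s using Fin.lastCases with
      | last =>
        rw [Fin.snoc_last]
        simpa [Fin.val_last] using le_trans hsum hmax
      | cast i =>
        rw [Fin.snoc_castSucc]
        simp only [Fin.coe_castSucc]
        exact le_trans (hgbd i)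
          (Nat.mul_le_mul_right _ (Finset.card_le_card (Finset.erase_subset _ _)))

lemma arith (nY nB nC s P u ucard ubcard : ℕ)
    (h7 : 7 * nY < nB) (h53 : 5 * nB ≤ 3 * nC)
    (hY : 0 < nY) (hP : (s + 1) * (nC * nB) ≤ nY * P)
    (hu : u ≤ 4 * s + 3) (h1 : ucard ≤ u) (h2 : ubcard ≤ u) :
    ucard * nB + ubcard * nC < P := by
  have hnB : 0 < nB := by omega
  have hnC : 0 < nC := by omega
  have e1 : ucard * nB + ubcard * nC ≤ (4 * s + 3) * (nB + nC) := by
    calc ucard * nB + ubcard * nC ≤ (4 * s + 3) * nB + (4 * s + 3) * nC :=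
          Nat.add_le_add (Nat.mul_le_mul_right _ (by omega)) (Nat.mul_le_mul_right _ (by omega))
      _ = (4 * s + 3) * (nB + nC) := by ring
  have e2 : (4 * s + 3) * (nB + nC) ≤ 7 * ((s + 1) * nC) := by
    have h5 : 5 * ((4 * s + 3) * (nB + nC)) ≤ 5 * (7 * ((s + 1) * nC)) := by
      calc 5 * ((4 * s + 3) * (nB + nC)) = (4 * s + 3) * (5 * nB + 5 * nC) := by ring
        _ ≤ (4 * s + 3) * (8 * nC) := Nat.mul_le_mul_left _ (by omega)
        _ = ((4 * s + 3) * 8) * nC := by ring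
        _ ≤ (35 * (s + 1)) * nC := Nat.mul_le_mul_right _ (by omega)
        _ = 5 * (7 * ((s + 1) * nC)) := by ring
    exact Nat.le_of_mul_le_mul_left h5 (by norm_num)
  have e3 : nY * ((4 * s + 3) * (nB + nC)) < nY * P := by
    calc nY * ((4 * s + 3) * (nB + nC)) ≤ nY * (7 * ((s + 1) * nC)) :=
          Nat.mul_le_mul_left _ e2
      _ = (7 * nY) * ((s + 1) * nC) := by ring
      _ < nB * ((s + 1) * nC) :=
          mul_lt_mul_of_pos_right h7 (by positivity)
      _ = (s + 1) * (nC * nB) := by ring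
      _ ≤ nY * P := hP
  have e4 : (4 * s + 3) * (nB + nC) < P := Nat.lt_of_mul_lt_mul_left e3
  omega

lemma four_pick {Y B C : Type*} (G : C → Y → B → Prop) (y0 : Y)
    (UC : Finset C) (UB : Finset B)
    (key : ∀ (UC' : Finset C) (UB' : Finset B), UC'.card ≤ UC.card + 3 →
      UB'.card ≤ UB.card + 3 → ∃ c b, G c y0 b ∧ c ∉ UC' ∧ b ∉ UB') :
    ∃ (nb : Fin 4 → B) (nc : Fin 4 → C), Function.Injective nb ∧
      Function.Injective nc ∧ (∀ j, nb j ∉ UB) ∧ (∀ j, nc j ∉ UC) ∧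
      ∀ j, G (nc j) y0 (nb j) := by
  classical
  obtain ⟨c0, b0, hg0, hc0, hb0⟩ := key UC UB (by omega) (by omega)
  obtain ⟨c1, b1, hg1, hc1, hb1⟩ := key (insert c0 UC) (insert b0 UB)
    (le_trans (Finset.card_insert_le _ _) (by omega))
    (le_trans (Finset.card_insert_le _ _) (by omega))
  obtain ⟨c2, b2, hg2, hc2, hb2⟩ := key (insert c1 (insert c0 UC))
    (insert b1 (insert b0 UB))
    (le_trans (Finset.card_insert_le _ _)
      (by have := Finset.card_insert_le c0 UC; omega))
    (le_trans (Finset.card_insert_le _ _)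
      (by have := Finset.card_insert_le b0 UB; omega))
  obtain ⟨c3, b3, hg3, hc3, hb3⟩ := key (insert c2 (insert c1 (insert c0 UC)))
    (insert b2 (insert b1 (insert b0 UB)))
    (le_trans (Finset.card_insert_le _ _)
      (by have h1 := Finset.card_insert_le c1 (insert c0 UC)
          have h2 := Finset.card_insert_le c0 UC; omega))
    (le_trans (Finset.card_insert_le _ _)
      (by have h1 := Finset.card_insert_le b1 (insert b0 UB)
          have h2 := Finset.card_insert_le b0 UB; omega))
  simp only [Finset.mem_insert, not_or] at hc1 hb1 hc2 hb2 hc3 hb3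
  refine ⟨![b0, b1, b2, b3], ![c0, c1, c2, c3], ?_, ?_, ?_, ?_, ?_⟩
  · intro a b hab
    fin_cases a <;> fin_cases b <;> simp_all
  · intro a b hab
    fin_cases a <;> fin_cases b <;> simp_all
  · intro j; fin_cases j <;> simp_all
  · intro j; fin_cases j <;> simp_all
  · intro j; fin_cases j <;> simp_all

/-- **Rainbow stars lemma** (Cheng–Sun).  Let `𝒞` be a set of colours and
`𝒢 = {G i : i ∈ 𝒞}` bipartite graphs on a common bipartition `Y ∪ B` with
`7|Y| < |B| ≤ (3/5)|𝒞|`.  If `∑_{i ∈ 𝒞} |E(G i)| ≥ t·|B|·|𝒞|` for some integer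
`1 ≤ t ≤ |Y|`, then there are `t` pairwise vertex-disjoint rainbow stars, each with its
centre in `Y` and 4 leaves in `B`, whose `4t` edges receive pairwise distinct colours
`col s j` with each edge lying in the graph of its colour. -/
theorem rainbow_stars {Y B C : Type*} [Fintype Y] [Fintype B] [Fintype C]
    (G : C → Y → B → Prop) (t : ℕ)
    (hYB : 7 * Fintype.card Y < Fintype.card B)
    (hBC : (Fintype.card B : ℝ) ≤ 3 / 5 * Fintype.card C)
    (ht1 : 1 ≤ t) (ht2 : t ≤ Fintype.card Y)
    (hE : (t * Fintype.card B * Fintype.card C : ℝ) ≤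
      ∑ i : C, (Nat.card {p : Y × B // G i p.1 p.2} : ℝ)) :
    ∃ c : Fin t → Y, ∃ l : Fin t → Fin 4 → B, ∃ col : Fin t → Fin 4 → C,
      Function.Injective c ∧
      Function.Injective (fun p : Fin t × Fin 4 => l p.1 p.2) ∧
      Function.Injective (fun p : Fin t × Fin 4 => col p.1 p.2) ∧
      ∀ s : Fin t, ∀ j : Fin 4, G (col s j) (c s) (l s j) := by
  classical
  set nY := Fintype.card Y with hnY
  set nB := Fintype.card B with hnB
  set nC := Fintype.card C with hnC
  have h53 : 5 * nB ≤ 3 * nC := by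
    have : (5 * nB : ℝ) ≤ 3 * nC := by linarith
    exact_mod_cast this
  have hY : 0 < nY := lt_of_lt_of_le ht1 ht2
  have htsum : t * (nC * nB) ≤ ∑ y : Y, pairCount G y := by
    have h1 : (t * nB * nC : ℝ) ≤ ((∑ i : C, Nat.card {p : Y × B // G i p.1 p.2} : ℕ) : ℝ) := by
      push_cast
      exact_mod_cast hE
    have h2 : t * nB * nC ≤ ∑ i : C, Nat.card {p : Y × B // G i p.1 p.2} := by
      exact_mod_cast h1
    rw [double_count] at h2
    calc t * (nC * nB) = t * nB * nC := by ring
      _ ≤ _ := h2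
  obtain ⟨g, hginj, -, hgbd⟩ := top_select (pairCount G) (nC * nB)
    (fun y => pairCount_le G y) t Finset.univ
    (by rw [Finset.card_univ]; exact ht2) htsum
  rw [Finset.card_univ] at hgbd
  -- main greedy construction
  have main : ∀ s : ℕ, ∀ hs : s ≤ t,
      ∃ (lb : Fin s → Fin 4 → B) (lc : Fin s → Fin 4 → C),
        Function.Injective (fun p : Fin s × Fin 4 => lb p.1 p.2) ∧
        Function.Injective (fun p : Fin s × Fin 4 => lc p.1 p.2) ∧
        ∀ (i : Fin s) (j : Fin 4),
          G (lc i j) (g ⟨i.1, Nat.lt_of_lt_of_le i.isLt hs⟩) (lb i j) := by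
    intro s
    induction s with
    | zero =>
      intro _
      exact ⟨fun i => i.elim0, fun i => i.elim0,
        fun p => p.1.elim0, fun p => p.1.elim0, fun i => i.elim0⟩
    | succ n ihn =>
      intro hs
      obtain ⟨lb, lc, hlbinj, hlcinj, hG⟩ := ihn (Nat.le_of_succ_le hs)
      have hsn : n < t := hs
      set y0 := g ⟨n, hsn⟩ with hy0
      have hbd : (n + 1) * (nC * nB) ≤ nY * pairCount G y0 := by
        simpa using hgbd ⟨n, hsn⟩
      set UB := Finset.image (fun p : Fin n × Fin 4 => lb p.1 p.2) Finset.univ with hUBdef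
      set UC := Finset.image (fun p : Fin n × Fin 4 => lc p.1 p.2) Finset.univ with hUCdef
      have hUBcard : UB.card ≤ 4 * n := by
        calc UB.card ≤ (Finset.univ : Finset (Fin n × Fin 4)).card := Finset.card_image_le
          _ = 4 * n := by simp [Finset.card_univ]; ring
      have hUCcard : UC.card ≤ 4 * n := by
        calc UC.card ≤ (Finset.univ : Finset (Fin n × Fin 4)).card := Finset.card_image_le
          _ = 4 * n := by simp [Finset.card_univ]; ring
      have key : ∀ (UC' : Finset C) (UB' : Finset B), UC'.card ≤ 4 * n + 3 →
          UB'.card ≤ 4 * n + 3 → ∃ c b, G c y0 b ∧ c ∉ UC' ∧ b ∉ UB' := by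
        intro UC' UB' h1 h2
        exact pick_pair G y0 UC' UB'
          (arith nY nB nC n (pairCount G y0) (4 * n + 3) UC'.card UB'.card
            hYB h53 hY hbd le_rfl h1 h2)
      obtain ⟨nb, nc, hnbinj, hncinj, hnbU, hncU, hGnew⟩ :=
        four_pick G y0 UC UB (fun UC' UB' h1 h2 =>
          key UC' UB' (by omega) (by omega))
      refine ⟨Fin.snoc lb nb, Fin.snoc lc nc, ?_, ?_, ?_⟩
      · intro p q hpq
        obtain ⟨i, j⟩ := p; obtain ⟨i', j'⟩ := q
        simp only at hpq
        induction i using Fin.lastCases with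
        | last =>
          induction i' using Fin.lastCases with
          | last =>
            rw [Fin.snoc_last] at hpq
            exact congrArg _ (hnbinj hpq)
          | cast i' =>
            rw [Fin.snoc_last, Fin.snoc_castSucc] at hpq
            exact absurd (Finset.mem_image.mpr ⟨(i', j'), Finset.mem_univ _, rfl⟩)
              (hpq ▸ hnbU j)
        | cast i =>
          induction i' using Fin.lastCases with
          | last =>
            rw [Fin.snoc_last, Fin.snoc_castSucc] at hpq
            exact absurd (Finset.mem_image.mpr ⟨(i, j), Finset.mem_univ _, rfl⟩)
              (hpq ▸ hnbU j')
          | cast i' =>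
            rw [Fin.snoc_castSucc, Fin.snoc_castSucc] at hpq
            have := hlbinj (a₁ := (i, j)) (a₂ := (i', j')) hpq
            simp only [Prod.mk.injEq] at this
            exact Prod.ext (congrArg Fin.castSucc this.1) this.2
      · intro p q hpq
        obtain ⟨i, j⟩ := p; obtain ⟨i', j'⟩ := q
        simp only at hpq
        induction i using Fin.lastCases with
        | last =>
          induction i' using Fin.lastCases with
          | last =>
            rw [Fin.snoc_last] at hpq
            exact congrArg _ (hncinj hpq)
          | cast i' =>
            rw [Fin.snoc_last, Fin.snoc_castSucc] at hpq
            exact absurd (Finset.mem_image.mpr ⟨(i', j'), Finset.mem_univ _, rfl⟩)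
              (hpq ▸ hncU j)
        | cast i =>
          induction i' using Fin.lastCases with
          | last =>
            rw [Fin.snoc_last, Fin.snoc_castSucc] at hpq
            exact absurd (Finset.mem_image.mpr ⟨(i, j), Finset.mem_univ _, rfl⟩)
              (hpq ▸ hncU j')
          | cast i' =>
            rw [Fin.snoc_castSucc, Fin.snoc_castSucc] at hpq
            have := hlcinj (a₁ := (i, j)) (a₂ := (i', j')) hpq
            simp only [Prod.mk.injEq] at this
            exact Prod.ext (congrArg Fin.castSucc this.1) this.2
      · intro i j
        induction i using Fin.lastCases with
        | last =>
          rw [Fin.snoc_last, Fin.snoc_last]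
          exact hGnew j
        | cast i =>
          rw [Fin.snoc_castSucc, Fin.snoc_castSucc]
          exact hG i j
  obtain ⟨lb, lc, h1, h2, h3⟩ := main t le_rfl
  exact ⟨g, lb, lc, hginj, h1, h2, fun s j => h3 s j⟩
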